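/- In a finite directed multigraph with n nodes, the color-refinement sequence of equivalence relations ≃_0, ≃_1, ≃_2, ... (defined by truncated-view isomorphism) stabilizes after at most n−1 steps: ≃_{n-1} = ≃_m for all m ≥ n−1. -/

import Mathlib

/-- A directed multigraph: node set `N`, arc set `A`, source and target maps. -/
structure Multigraph (N A : Type) where
  s : A → N
  t : A → N

/-- A homomorphism of directed multigraphs: maps on nodes and arcs commuting
with source and target. -/
structure GraphHom {N A N' A' : Type} (G : Multigraph N A) (B : Multigraph N' A') where
  nodeMap : N → N'
  arcMap : A → A'
  map_s : ∀ a, B.s (arcMap a) = nodeMap (G.s a)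
  map_t : ∀ a, B.t (arcMap a) = nodeMap (G.t a)

/-- A fibration: every arc of the base lifts uniquely at every node in the
fibre of its target. -/
def IsFibration {N A N' A' : Type} {G : Multigraph N A} {B : Multigraph N' A'}
    (φ : GraphHom G B) : Prop :=
  ∀ (a : A') (x : N), φ.nodeMap x = B.t a →
    ∃! a' : A, φ.arcMap a' = a ∧ G.t a' = x

/-- `IsPathTo G l x` : `l` is (the reversed arc list of) a path ending at `x`;
the head of `l` is the arc closest to `x`. The empty list is the empty path at `x`. -/
def IsPathTo {N A : Type} (G : Multigraph N A) : List A → N → Prop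
  | [], _ => True
  | a :: l, x => G.t a = x ∧ IsPathTo G l (G.s a)

/-- Nodes of the truncation at height `k` of the view of `G` at `x`. -/
abbrev ViewTrunc {N A : Type} (G : Multigraph N A) (x : N) (k : ℕ) :=
  {l : List A // IsPathTo G l x ∧ l.length ≤ k}

/-- Isomorphism of the height-`k` truncations of the views at `x` and `y`,
as rooted trees. -/
def ViewTruncIso {N A : Type} (G : Multigraph N A) (x y : N) (k : ℕ) : Prop :=
  ∃ e : ViewTrunc G x k ≃ ViewTrunc G y k,
    ((e ⟨[], by simp [IsPathTo]⟩ : ViewTrunc G y k) : List A) = [] ∧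
    ∀ p q : ViewTrunc G x k,
      (∃ a, (p : List A) = (q : List A) ++ [a]) ↔
      (∃ a, ((e p : ViewTrunc G y k) : List A) = ((e q : ViewTrunc G y k) : List A) ++ [a])

section ColorRefinement

variable {N A : Type} {G : Multigraph N A} {x y z : N} {k k' : ℕ}

lemma isPathTo_cons {a : A} {l : List A} :
    IsPathTo G (a :: l) x ↔ G.t a = x ∧ IsPathTo G l (G.s a) := Iff.rfl

lemma isPathTo_append {l₁ l₂ : List A} (h : IsPathTo G (l₁ ++ l₂) x) :
    IsPathTo G l₁ x := by
  induction l₁ generalizing x with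
  | nil => trivial
  | cons a l ih =>
    rw [List.cons_append, isPathTo_cons] at h
    exact ⟨h.1, ih h.2⟩

lemma len_tail {a : A} {l : List A} (h : (a :: l).length ≤ k + 1) : l.length ≤ k := by
  simp only [List.length_cons] at h; omega

/-- A bundled "good" equivalence witnessing `ViewTruncIso`. -/
structure Good (G : Multigraph N A) (x y : N) (k : ℕ) where
  e : ViewTrunc G x k ≃ ViewTrunc G y k
  h0 : ((e ⟨[], by simp [IsPathTo]⟩ : ViewTrunc G y k) : List A) = []
  h1 : ∀ p q : ViewTrunc G x k,
      (∃ a, (p : List A) = (q : List A) ++ [a]) ↔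
      (∃ a, ((e p : ViewTrunc G y k) : List A) = ((e q : ViewTrunc G y k) : List A) ++ [a])

lemma viewTruncIso_iff_good :
    ViewTruncIso G x y k ↔ Nonempty (Good G x y k) :=
  ⟨fun ⟨e, h0, h1⟩ => ⟨⟨e, h0, h1⟩⟩, fun ⟨g⟩ => ⟨g.e, g.h0, g.h1⟩⟩

lemma Good.len (g : Good G x y k) (p : ViewTrunc G x k) :
    ((g.e p : ViewTrunc G y k) : List A).length = (p : List A).length := by
  obtain ⟨n, hn⟩ : ∃ n, (p : List A).length ≤ n := ⟨_, le_refl _⟩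
  induction n generalizing p with
  | zero =>
    have hp : (p : List A) = [] := List.length_eq_zero_iff.mp (Nat.le_zero.mp hn)
    have hp' : p = ⟨[], by simp [IsPathTo]⟩ := Subtype.ext hp
    rw [hp', g.h0]
  | succ n ih =>
    rcases List.eq_nil_or_concat' (p : List A) with hp | ⟨q, a, hp⟩
    · have hp' : p = ⟨[], by simp [IsPathTo]⟩ := Subtype.ext hp
      rw [hp', g.h0]
    · have hq : IsPathTo G q x := isPathTo_append (hp ▸ p.2.1)
      have hlen : q.length + 1 = (p : List A).length := by rw [hp]; simp
      have hqlen : q.length ≤ k := by have := p.2.2; omega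
      obtain ⟨b, hb⟩ := (g.h1 p ⟨q, hq, hqlen⟩).mp ⟨a, hp⟩
      rw [hb, hp]
      have := ih ⟨q, hq, hqlen⟩ (by simp only [Subtype.coe_mk] at *; omega)
      simp [this]

lemma Good.coe_eq_nil (g : Good G x y k) (p : ViewTrunc G x k) :
    ((g.e p : ViewTrunc G y k) : List A) = [] ↔ (p : List A) = [] := by
  rw [← List.length_eq_zero_iff, ← List.length_eq_zero_iff, g.len]

/-- The inverse of a good equivalence is good. -/
def Good.symm (g : Good G x y k) : Good G y x k where
  e := g.e.symm
  h0 := by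
    have h : g.e ⟨[], by simp [IsPathTo]⟩ = ⟨[], by simp [IsPathTo]⟩ := Subtype.ext g.h0
    rw [← h, Equiv.symm_apply_apply]
  h1 := by
    intro p q
    have := (g.h1 (g.e.symm p) (g.e.symm q)).symm
    rwa [Equiv.apply_symm_apply, Equiv.apply_symm_apply] at this

@[simp] lemma Good.symm_e (g : Good G x y k) : g.symm.e = g.e.symm := rfl

def Good.trans (g : Good G x y k) (g' : Good G y z k) : Good G x z k where
  e := g.e.trans g'.e
  h0 := by
    show ((g'.e (g.e _) : ViewTrunc G z k) : List A) = []
    rw [show g.e ⟨[], by simp [IsPathTo]⟩ = ⟨[], by simp [IsPathTo]⟩ from Subtype.ext g.h0]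
    exact g'.h0
  h1 := fun p q => (g.h1 p q).trans (g'.h1 (g.e p) (g.e q))

/-- Push a truncated view element into a deeper truncation. -/
def up (hk : k ≤ k') (p : ViewTrunc G x k) : ViewTrunc G x k' :=
  ⟨p.1, p.2.1, p.2.2.trans hk⟩

def Good.restrictFun (g : Good G x y k') (hk : k ≤ k') (p : ViewTrunc G x k) :
    ViewTrunc G y k :=
  ⟨(g.e (up hk p) : ViewTrunc G y k').1, (g.e (up hk p)).2.1,
    (g.len (up hk p)).trans_le p.2.2⟩

def Good.restrict (g : Good G x y k') (hk : k ≤ k') : Good G x y k where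
  e :=
    { toFun := g.restrictFun hk
      invFun := g.symm.restrictFun hk
      left_inv := by
        intro p
        apply Subtype.ext
        have key : up hk (g.restrictFun hk p) = g.e (up hk p) := Subtype.ext rfl
        show ((g.e.symm (up hk (g.restrictFun hk p)) : ViewTrunc G x k') : List A) = p.1
        rw [key, Equiv.symm_apply_apply]
        rfl
      right_inv := by
        intro q
        apply Subtype.ext
        have key : up hk (g.symm.restrictFun hk q) = g.e.symm (up hk q) := Subtype.ext rfl
        show ((g.e (up hk (g.symm.restrictFun hk q)) : ViewTrunc G y k') : List A) = q.1
        rw [key, Equiv.apply_symm_apply]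
        rfl }
  h0 := g.h0
  h1 := fun p q => g.h1 (up hk p) (up hk q)

lemma viewTruncIso_mono (hk : k ≤ k') (h : ViewTruncIso G x y k') :
    ViewTruncIso G x y k := by
  rw [viewTruncIso_iff_good] at *
  exact h.map (fun g => g.restrict hk)

lemma viewTruncIso_zero (x y : N) : ViewTruncIso G x y 0 := by
  have hx : ∀ p : ViewTrunc G x 0, (p : List A) = [] :=
    fun p => List.length_eq_zero_iff.mp (Nat.le_zero.mp p.2.2)
  have hy : ∀ p : ViewTrunc G y 0, (p : List A) = [] :=
    fun p => List.length_eq_zero_iff.mp (Nat.le_zero.mp p.2.2)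
  refine ⟨⟨fun _ => ⟨[], trivial, by simp⟩, fun _ => ⟨[], trivial, by simp⟩, ?_, ?_⟩, rfl, ?_⟩
  · intro p; exact (Subtype.ext (hx p)).symm
  · intro p; exact (Subtype.ext (hy p)).symm
  · intro p q
    constructor
    · rintro ⟨a, ha⟩
      rw [hx p, hx q] at ha
      simp at ha
    · rintro ⟨a, ha⟩
      simp at ha

/-- In-arcs at a node. -/
def InArc (G : Multigraph N A) (x : N) := {a : A // G.t a = x}

/-- The length-one path given by an in-arc. -/
def single (a : InArc G x) (k : ℕ) : ViewTrunc G x (k + 1) :=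
  ⟨[a.1], ⟨a.2, trivial⟩, by simp⟩

lemma Good.exists_single (g : Good G x y (k + 1)) (a : InArc G x) :
    ∃ b : InArc G y, ((g.e (single a k) : ViewTrunc G y (k + 1)) : List A) = [b.1] := by
  have hl : ((g.e (single a k) : ViewTrunc G y (k + 1)) : List A).length = 1 := by
    rw [g.len]; rfl
  obtain ⟨b, hb⟩ := List.length_eq_one_iff.mp hl
  have hp := (g.e (single a k)).2.1
  rw [hb] at hp
  exact ⟨⟨b, hp.1⟩, hb⟩

noncomputable def Good.arcMap (g : Good G x y (k + 1)) (a : InArc G x) : InArc G y :=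
  (g.exists_single a).choose

lemma Good.arcMap_spec (g : Good G x y (k + 1)) (a : InArc G x) :
    ((g.e (single a k) : ViewTrunc G y (k + 1)) : List A) = [(g.arcMap a).1] :=
  (g.exists_single a).choose_spec

lemma Good.arcMap_inv (g : Good G x y (k + 1)) (a : InArc G x) :
    g.symm.arcMap (g.arcMap a) = a := by
  have h2 := g.symm.arcMap_spec (g.arcMap a)
  have h3 : (single (g.arcMap a) k : ViewTrunc G y (k + 1)) = g.e (single a k) :=
    Subtype.ext (g.arcMap_spec a).symm
  rw [h3] at h2
  rw [show g.symm.e = g.e.symm from rfl, Equiv.symm_apply_apply] at h2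
  simp only [single, List.cons.injEq, and_true] at h2
  exact Subtype.ext h2.symm

noncomputable def Good.arcEquiv (g : Good G x y (k + 1)) : InArc G x ≃ InArc G y :=
  ⟨g.arcMap, g.symm.arcMap, g.arcMap_inv, fun b => g.symm.arcMap_inv b⟩

lemma Good.head_pres (g : Good G x y (k + 1)) (a : InArc G x) (l : List A) :
    ∀ h : IsPathTo G (a.1 :: l) x ∧ (a.1 :: l).length ≤ k + 1,
      ∃ m, ((g.e ⟨a.1 :: l, h⟩ : ViewTrunc G y (k + 1)) : List A) = (g.arcMap a).1 :: m := by
  induction l using List.reverseRecOn with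
  | nil => intro h; exact ⟨[], g.arcMap_spec a⟩
  | append_singleton l c ih =>
    intro h
    have hq : IsPathTo G (a.1 :: l) x ∧ (a.1 :: l).length ≤ k + 1 := by
      constructor
      · have h1 := h.1
        rw [show a.1 :: (l ++ [c]) = (a.1 :: l) ++ [c] from rfl] at h1
        exact isPathTo_append h1
      · have := h.2; simp only [List.length_cons, List.length_append,
          List.length_cons, List.length_nil] at this ⊢; omega
    obtain ⟨m, hm⟩ := ih hq
    obtain ⟨d, hd⟩ := (g.h1 ⟨a.1 :: (l ++ [c]), h⟩ ⟨a.1 :: l, hq⟩).mp ⟨c, rfl⟩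
    exact ⟨m ++ [d], by rw [hd, hm]; rfl⟩

lemma Good.sub (g : Good G x y (k + 1)) (a : InArc G x) :
    ViewTruncIso G (G.s a.1) (G.s (g.arcMap a).1) k := by
  classical
  have hfwd : ∀ l : ViewTrunc G (G.s a.1) k,
      ∃ m : ViewTrunc G (G.s (g.arcMap a).1) k,
        ((g.e ⟨a.1 :: l.1, ⟨a.2, l.2.1⟩, Nat.succ_le_succ l.2.2⟩ :
          ViewTrunc G y (k + 1)) : List A) = (g.arcMap a).1 :: m.1 := by
    intro l
    obtain ⟨m, hm⟩ := g.head_pres a l.1 ⟨⟨a.2, l.2.1⟩, Nat.succ_le_succ l.2.2⟩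
    have hp := (g.e ⟨a.1 :: l.1, ⟨a.2, l.2.1⟩, Nat.succ_le_succ l.2.2⟩).2.1
    rw [hm] at hp
    have hlen := g.len ⟨a.1 :: l.1, ⟨a.2, l.2.1⟩, Nat.succ_le_succ l.2.2⟩
    rw [hm] at hlen
    simp only [List.length_cons] at hlen
    exact ⟨⟨m, hp.2, by have := l.2.2; omega⟩, hm⟩
  choose F hF using hfwd
  have hback : ∀ m : ViewTrunc G (G.s (g.arcMap a).1) k,
      ∃ l : ViewTrunc G (G.s a.1) k,
        ((g.e.symm ⟨(g.arcMap a).1 :: m.1, ⟨(g.arcMap a).2, m.2.1⟩, Nat.succ_le_succ m.2.2⟩ :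
          ViewTrunc G x (k + 1)) : List A) = a.1 :: l.1 := by
    intro m
    obtain ⟨l, hl⟩ := g.symm.head_pres (g.arcMap a) m.1
      ⟨⟨(g.arcMap a).2, m.2.1⟩, Nat.succ_le_succ m.2.2⟩
    rw [g.arcMap_inv a] at hl
    simp only [Good.symm_e] at hl
    have hp := (g.e.symm ⟨(g.arcMap a).1 :: m.1, ⟨(g.arcMap a).2, m.2.1⟩,
      Nat.succ_le_succ m.2.2⟩).2.1
    rw [hl] at hp
    have hlen := g.symm.len ⟨(g.arcMap a).1 :: m.1, ⟨(g.arcMap a).2, m.2.1⟩,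
      Nat.succ_le_succ m.2.2⟩
    simp only [Good.symm_e] at hlen
    rw [hl] at hlen
    simp only [List.length_cons] at hlen
    exact ⟨⟨l, hp.2, by have := m.2.2; omega⟩, hl⟩
  choose B hB using hback
  refine ⟨⟨F, B, ?_, ?_⟩, ?_, ?_⟩
  · intro l
    have h2 := hB (F l)
    have key : (⟨(g.arcMap a).1 :: (F l).1, ⟨(g.arcMap a).2, (F l).2.1⟩,
        Nat.succ_le_succ (F l).2.2⟩ : ViewTrunc G y (k + 1)) =
        g.e ⟨a.1 :: l.1, ⟨a.2, l.2.1⟩, Nat.succ_le_succ l.2.2⟩ :=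
      Subtype.ext (hF l).symm
    rw [key, Equiv.symm_apply_apply] at h2
    apply Subtype.ext
    simpa using h2.symm
  · intro m
    have h1 := hF (B m)
    have key : (⟨a.1 :: (B m).1, ⟨a.2, (B m).2.1⟩, Nat.succ_le_succ (B m).2.2⟩ :
        ViewTrunc G x (k + 1)) =
        g.e.symm ⟨(g.arcMap a).1 :: m.1, ⟨(g.arcMap a).2, m.2.1⟩, Nat.succ_le_succ m.2.2⟩ :=
      Subtype.ext (hB m).symm
    rw [key, Equiv.apply_symm_apply] at h1
    apply Subtype.ext
    simpa using h1.symm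
  · -- root condition
    have h1 := hF ⟨[], trivial, by simp⟩
    have h2 := g.arcMap_spec a
    have h3 := h1.symm.trans h2
    have h4 : (F ⟨[], trivial, by simp⟩).1 = [] := by
      simpa using congrArg List.tail h3
    exact h4
  · intro p q
    constructor
    · rintro ⟨c, hc⟩
      obtain ⟨d, hd⟩ := (g.h1 ⟨a.1 :: p.1, ⟨a.2, p.2.1⟩, Nat.succ_le_succ p.2.2⟩
        ⟨a.1 :: q.1, ⟨a.2, q.2.1⟩, Nat.succ_le_succ q.2.2⟩).mp ⟨c, by simp [hc]⟩
      rw [hF p, hF q] at hd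
      exact ⟨d, by simpa using hd⟩
    · rintro ⟨d, hd⟩
      have hex : ∃ d', ((g.e ⟨a.1 :: p.1, ⟨a.2, p.2.1⟩, Nat.succ_le_succ p.2.2⟩ :
            ViewTrunc G y (k + 1)) : List A) =
          ((g.e ⟨a.1 :: q.1, ⟨a.2, q.2.1⟩, Nat.succ_le_succ q.2.2⟩ :
            ViewTrunc G y (k + 1)) : List A) ++ [d'] :=
        ⟨d, by rw [hF p, hF q]; simpa using hd⟩
      obtain ⟨c, hc⟩ := (g.h1 _ _).mpr hex
      exact ⟨c, by simpa using hc⟩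

lemma unfold_iso (h : ViewTruncIso G x y (k + 1)) :
    ∃ β : InArc G x ≃ InArc G y,
      ∀ a : InArc G x, ViewTruncIso G (G.s a.1) (G.s ((β a : InArc G y)).1) k := by
  obtain ⟨g⟩ := viewTruncIso_iff_good.mp h
  exact ⟨g.arcEquiv, fun a => g.sub a⟩

/-- Extension function used to fold per-arc isomorphisms into a tree isomorphism. -/
def extFun (β : InArc G x ≃ InArc G y)
    (e : ∀ a : InArc G x, ViewTrunc G (G.s a.1) k → ViewTrunc G (G.s ((β a : InArc G y)).1) k) :
    ViewTrunc G x (k + 1) → ViewTrunc G y (k + 1)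
  | ⟨[], _⟩ => ⟨[], trivial, by simp⟩
  | ⟨a :: l, hp⟩ =>
    ⟨((β ⟨a, hp.1.1⟩ : InArc G y)).1 :: (e ⟨a, hp.1.1⟩ ⟨l, hp.1.2, len_tail hp.2⟩).1,
      ⟨(β ⟨a, hp.1.1⟩ : InArc G y).2, (e ⟨a, hp.1.1⟩ ⟨l, hp.1.2, len_tail hp.2⟩).2.1⟩,
      Nat.succ_le_succ (e ⟨a, hp.1.1⟩ ⟨l, hp.1.2, len_tail hp.2⟩).2.2⟩

lemma extFun_nil (β : InArc G x ≃ InArc G y)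
    (e : ∀ a : InArc G x, ViewTrunc G (G.s a.1) k → ViewTrunc G (G.s ((β a : InArc G y)).1) k)
    (h : IsPathTo G [] x ∧ ([] : List A).length ≤ k + 1) :
    (extFun β e ⟨[], h⟩ : ViewTrunc G y (k + 1)).1 = [] := rfl

lemma extFun_cons (β : InArc G x ≃ InArc G y)
    (e : ∀ a : InArc G x, ViewTrunc G (G.s a.1) k → ViewTrunc G (G.s ((β a : InArc G y)).1) k)
    (a : A) (l : List A) (hp : IsPathTo G (a :: l) x ∧ (a :: l).length ≤ k + 1) :
    (extFun β e ⟨a :: l, hp⟩ : ViewTrunc G y (k + 1)).1 =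
      ((β ⟨a, hp.1.1⟩ : InArc G y)).1 :: (e ⟨a, hp.1.1⟩ ⟨l, hp.1.2, len_tail hp.2⟩).1 := rfl

lemma fold_iso (β : InArc G x ≃ InArc G y)
    (h : ∀ a : InArc G x, ViewTruncIso G (G.s a.1) (G.s ((β a : InArc G y)).1) k) :
    ViewTruncIso G x y (k + 1) := by
  classical
  have h' : ∀ a, Nonempty (Good G (G.s a.1) (G.s ((β a : InArc G y)).1) k) :=
    fun a => viewTruncIso_iff_good.mp (h a)
  let cg : ∀ a : InArc G x, Good G (G.s a.1) (G.s ((β a : InArc G y)).1) k :=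
    fun a => (h' a).some
  have hinj : Function.Injective (extFun β (fun a => (cg a).e)) := by
    rintro ⟨lp, hp⟩ ⟨lq, hq⟩ hpq
    have hval := congrArg Subtype.val hpq
    match lp, hp, lq, hq, hval with
    | [], hp, [], hq, hval => exact Subtype.ext rfl
    | [], hp, b :: m, hq, hval =>
      rw [extFun_nil, extFun_cons] at hval; simp at hval
    | a :: l, hp, [], hq, hval =>
      rw [extFun_nil, extFun_cons] at hval; simp at hval
    | a :: l, hp, b :: m, hq, hval =>
      rw [extFun_cons, extFun_cons] at hval
      injection hval with h1 h2
      have hab : a = b := congrArg Subtype.val (β.injective (Subtype.ext h1))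
      subst hab
      have h3 : (cg ⟨a, hp.1.1⟩).e ⟨l, hp.1.2, len_tail hp.2⟩ =
          (cg ⟨a, hp.1.1⟩).e ⟨m, hq.1.2, len_tail hq.2⟩ := Subtype.ext h2
      have h4 := (cg ⟨a, hp.1.1⟩).e.injective h3
      have h5 : l = m := congrArg Subtype.val h4
      exact Subtype.ext (show a :: l = a :: m by rw [h5])
  have hsurj : Function.Surjective (extFun β (fun a => (cg a).e)) := by
    rintro ⟨lq, hq⟩
    match lq, hq with
    | [], hq => exact ⟨⟨[], trivial, by simp⟩, Subtype.ext rfl⟩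
    | b :: m, hq =>
      obtain ⟨a', ha'⟩ := β.surjective ⟨b, hq.1.1⟩
      have hval : ((β a' : InArc G y)).1 = b := congrArg Subtype.val ha'
      have hMpath : IsPathTo G m (G.s ((β a' : InArc G y)).1) := by
        rw [hval]; exact hq.1.2
      set M : ViewTrunc G (G.s ((β a' : InArc G y)).1) k := ⟨m, hMpath, len_tail hq.2⟩ with hM
      refine ⟨⟨a'.1 :: ((cg a').e.symm M).1, ⟨a'.2, ((cg a').e.symm M).2.1⟩,
        Nat.succ_le_succ ((cg a').e.symm M).2.2⟩, ?_⟩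
      apply Subtype.ext
      show ((β a' : InArc G y)).1 :: ((cg a').e ((cg a').e.symm M)).1 = b :: m
      rw [Equiv.apply_symm_apply]
      show ((β a' : InArc G y)).1 :: m = b :: m
      rw [hval]
  refine ⟨Equiv.ofBijective _ ⟨hinj, hsurj⟩, rfl, ?_⟩
  rintro ⟨lp, hp⟩ ⟨lq, hq⟩
  show (∃ c, lp = lq ++ [c]) ↔
    ∃ c, (extFun β (fun a => (cg a).e) ⟨lp, hp⟩ : ViewTrunc G y (k + 1)).1 =
      (extFun β (fun a => (cg a).e) ⟨lq, hq⟩ : ViewTrunc G y (k + 1)).1 ++ [c]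
  match lp, hp, lq, hq with
  | [], hp, lq, hq =>
    constructor
    · rintro ⟨c, hc⟩
      exact absurd (congrArg List.length hc) (by simp)
    · rintro ⟨c, hc⟩
      rw [extFun_nil] at hc
      exact absurd (congrArg List.length hc) (by simp)
  | a :: l, hp, [], hq =>
    constructor
    · rintro ⟨c, hc⟩
      simp only [List.nil_append, List.cons.injEq] at hc
      obtain ⟨rfl, rfl⟩ := hc
      refine ⟨((β ⟨a, hp.1.1⟩ : InArc G y)).1, ?_⟩
      rw [extFun_cons, extFun_nil]
      have hroot : ((cg ⟨a, hp.1.1⟩).e ⟨[], hp.1.2, len_tail hp.2⟩ :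
          ViewTrunc G (G.s ((β ⟨a, hp.1.1⟩ : InArc G y)).1) k).1 = [] := by
        rw [← List.length_eq_zero_iff, (cg ⟨a, hp.1.1⟩).len]; rfl
      rw [hroot]
      rfl
    · rintro ⟨c, hc⟩
      rw [extFun_cons, extFun_nil] at hc
      simp only [List.nil_append, List.cons.injEq] at hc
      have hl : l = [] := by
        have := (cg ⟨a, hp.1.1⟩).len ⟨l, hp.1.2, len_tail hp.2⟩
        rw [hc.2] at this
        exact List.length_eq_zero_iff.mp this.symm
      exact ⟨a, by simp [hl]⟩
  | a :: l, hp, b :: m, hq =>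
    by_cases hab : a = b
    · subst hab
      constructor
      · rintro ⟨c, hc⟩
        simp only [List.cons_append, List.cons.injEq, true_and] at hc
        obtain ⟨d, hd⟩ := ((cg ⟨a, hp.1.1⟩).h1 ⟨l, hp.1.2, len_tail hp.2⟩
          ⟨m, hq.1.2, len_tail hq.2⟩).mp ⟨c, hc⟩
        refine ⟨d, ?_⟩
        rw [extFun_cons, extFun_cons]
        simp only [List.cons_append, List.cons.injEq]
        exact ⟨trivial, hd⟩
      · rintro ⟨d, hd⟩
        rw [extFun_cons, extFun_cons] at hd
        simp only [List.cons_append, List.cons.injEq] at hd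
        obtain ⟨c, hc⟩ := ((cg ⟨a, hp.1.1⟩).h1 ⟨l, hp.1.2, len_tail hp.2⟩
          ⟨m, hq.1.2, len_tail hq.2⟩).mpr ⟨d, hd.2⟩
        exact ⟨c, congrArg (List.cons a) hc⟩
    · constructor
      · rintro ⟨c, hc⟩
        simp only [List.cons_append, List.cons.injEq] at hc
        exact absurd hc.1 hab
      · rintro ⟨d, hd⟩
        rw [extFun_cons, extFun_cons] at hd
        simp only [List.cons_append, List.cons.injEq] at hd
        exact absurd (congrArg Subtype.val (β.injective (Subtype.ext hd.1))) hab

lemma stable_forall (K : ℕ)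
    (hK : ∀ x y : N, ViewTruncIso G x y K → ViewTruncIso G x y (K + 1)) :
    ∀ m (x y : N), ViewTruncIso G x y K → ViewTruncIso G x y m := by
  intro m
  induction m with
  | zero => intro x y _; exact viewTruncIso_zero x y
  | succ m ih =>
    intro x y h
    obtain ⟨β, hβ⟩ := unfold_iso (hK x y h)
    exact fold_iso β fun a => ih _ _ (hβ a)

/-- The setoid of `k`-view equivalence. -/
def visoSetoid (G : Multigraph N A) (k : ℕ) : Setoid N where
  r x y := ViewTruncIso G x y k
  iseqv := by
    refine ⟨fun x => ⟨Equiv.refl _, rfl, fun _ _ => Iff.rfl⟩, ?_, ?_⟩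
    · intro x y h
      rw [viewTruncIso_iff_good] at *
      exact h.map Good.symm
    · intro x y z h h'
      rw [viewTruncIso_iff_good] at *
      exact Nonempty.map2 Good.trans h h'

lemma exists_stable (G : Multigraph N A) [Fintype N] [Nonempty N] :
    ∃ K ≤ Fintype.card N - 1,
      ∀ x y : N, ViewTruncIso G x y K → ViewTruncIso G x y (K + 1) := by
  classical
  by_contra hcon
  push_neg at hcon
  set n := Fintype.card N with hn
  have hn1 : 1 ≤ n := Fintype.card_pos
  let f : ℕ → ℕ := fun k => Fintype.card (Quotient (visoSetoid G k))
  have hle : ∀ k, f k ≤ n := by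
    intro k
    exact Fintype.card_le_of_surjective (Quotient.mk _)
      (fun q => Quotient.inductionOn q fun x => ⟨x, rfl⟩)
  have hpos : ∀ k, 1 ≤ f k := by
    intro k
    haveI : Nonempty (Quotient (visoSetoid G k)) := ⟨Quotient.mk _ (Classical.arbitrary N)⟩
    exact Fintype.card_pos
  have hstrict : ∀ K ≤ n - 1, f K < f (K + 1) := by
    intro K hK
    obtain ⟨x, y, hxy, hnxy⟩ := hcon K hK
    let φ : Quotient (visoSetoid G (K + 1)) → Quotient (visoSetoid G K) :=
      Quotient.map' id (fun a b hab => viewTruncIso_mono (Nat.le_succ K) hab)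
    have hsurj : Function.Surjective φ :=
      fun q => Quotient.inductionOn' q fun x => ⟨Quotient.mk'' x, rfl⟩
    have hninj : ¬ Function.Injective φ := by
      intro hinj
      have h1 : φ (Quotient.mk'' x) = φ (Quotient.mk'' y) := by
        show Quotient.map' id _ (Quotient.mk'' x) = Quotient.map' id _ (Quotient.mk'' y)
        show (Quotient.mk'' x : Quotient (visoSetoid G K)) = Quotient.mk'' y
        exact Quotient.sound' hxy
      exact hnxy (Quotient.exact' (hinj h1))
    exact Fintype.card_lt_of_surjective_not_injective φ hsurj hninj
  have hgrow : ∀ j, j ≤ n → j + 1 ≤ f j := by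
    intro j
    induction j with
    | zero => intro _; exact hpos 0
    | succ j ih =>
      intro hj
      have h1 := ih (by omega)
      have h2 := hstrict j (by omega)
      omega
  have := hgrow n (le_refl n)
  have := hle n
  omega

end ColorRefinement

/-- Color refinement stabilizes after at most `n - 1` steps on a graph with
`n` nodes. -/
theorem viewTruncIso_stabilizes_at_card_sub_one {N A : Type} [Fintype N] [Fintype A]
    (G : Multigraph N A) :
    ∀ m : ℕ, Fintype.card N - 1 ≤ m →
      ∀ x y : N, ViewTruncIso G x y (Fintype.card N - 1) ↔ ViewTruncIso G x y m := by
  intro m hm x y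
  rcases isEmpty_or_nonempty N with hN | hN
  · exact (hN.false x).elim
  · obtain ⟨K, hK, hstab⟩ := exists_stable G
    have hall := stable_forall K hstab
    constructor
    · intro h
      exact hall m x y (viewTruncIso_mono hK h)
    · intro h
      exact hall _ x y (viewTruncIso_mono (hK.trans hm) h)
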